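/- If there are more than (s−1)·log₂(n) primes below a bound B, then for any s distinct integers x_1,...,x_s in [1,n] and any index i, there exists a prime p < B with x_i ≢ x_j (mod p) for all j ≠ i. -/
import Mathlib

theorem good_prime_below_bound (s n : ℕ) (hs : 2 ≤ s) (hn : 2 ≤ n) (B : ℝ)
    (hB : ((s : ℝ) - 1) * Real.logb 2 n < ({p : ℕ | p.Prime ∧ (p : ℝ) < B}).ncard)
    (x : Fin s → ℤ) (hinj : Function.Injective x)
    (hrange : ∀ k, 1 ≤ x k ∧ x k ≤ (n : ℤ)) (i : Fin s) :
    ∃ p : ℕ, p.Prime ∧ (p : ℝ) < B ∧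
      ∀ j : Fin s, j ≠ i → ¬ (x i ≡ x j [ZMOD (p : ℤ)]) := by
  set S : Set ℕ := {p : ℕ | p.Prime ∧ (p : ℝ) < B} with hS
  have hfin : S.Finite := by
    apply (Set.finite_Iio ⌈B⌉₊).subset
    intro p hp
    have : (p : ℝ) < (⌈B⌉₊ : ℝ) := lt_of_lt_of_le hp.2 (Nat.le_ceil B)
    exact_mod_cast this
  set F : Finset ℕ := hfin.toFinset with hF
  have hcardF : S.ncard = F.card := Set.ncard_eq_toFinset_card _ hfin
  -- bad primes
  set Bad : Finset ℕ :=
    (Finset.univ.erase i).biUnion (fun j => (x i - x j).natAbs.primeFactors) with hBad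
  -- each difference has few prime factors
  have hfac : ∀ j : Fin s, j ≠ i →
      ((x i - x j).natAbs.primeFactors.card : ℝ) ≤ Real.logb 2 n := by
    intro j hj
    set d := (x i - x j).natAbs with hd
    have hd0 : d ≠ 0 := by
      simp only [hd, Int.natAbs_ne_zero, sub_ne_zero]
      exact fun h => hj (hinj h.symm)
    have hdn : d < n := by
      have h1 := hrange i
      have h2 := hrange j
      have habs : ((d : ℤ)) = |x i - x j| := by rw [hd, Int.abs_eq_natAbs]
      have : (d : ℤ) < (n : ℤ) := by
        rw [habs, abs_lt]; constructor <;> linarith [h1.1, h1.2, h2.1, h2.2]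
      exact_mod_cast this
    have hpow : 2 ^ d.primeFactors.card ≤ d := by
      calc 2 ^ d.primeFactors.card ≤ ∏ p ∈ d.primeFactors, p :=
            Finset.pow_card_le_prod _ _ _ (fun p hp => (Nat.prime_of_mem_primeFactors hp).two_le)
        _ ≤ d := Nat.le_of_dvd (Nat.pos_of_ne_zero hd0) (Nat.prod_primeFactors_dvd d)
    have hpowR : (2 : ℝ) ^ d.primeFactors.card ≤ (n : ℝ) := by
      have : (2 : ℕ) ^ d.primeFactors.card ≤ n := le_of_lt (lt_of_le_of_lt hpow hdn)
      exact_mod_cast this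
    calc (d.primeFactors.card : ℝ)
        = Real.logb 2 ((2:ℝ) ^ d.primeFactors.card) := by
          rw [Real.logb_pow, Real.logb_self_eq_one (by norm_num)]; ring
      _ ≤ Real.logb 2 n := Real.logb_le_logb_of_le (by norm_num)
          (by positivity) (by exact_mod_cast hpowR)
  have hBadcard : (Bad.card : ℝ) ≤ ((s : ℝ) - 1) * Real.logb 2 n := by
    have h1 : Bad.card ≤ ∑ j ∈ Finset.univ.erase i, (x i - x j).natAbs.primeFactors.card :=
      Finset.card_biUnion_le
    have h2 : ((∑ j ∈ Finset.univ.erase i, (x i - x j).natAbs.primeFactors.card : ℕ) : ℝ)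
        ≤ ∑ j ∈ Finset.univ.erase i, Real.logb 2 n := by
      push_cast
      exact Finset.sum_le_sum (fun j hj => hfac j (Finset.ne_of_mem_erase hj))
    have h3 : ∑ j ∈ Finset.univ.erase i, Real.logb 2 n
        = ((s : ℝ) - 1) * Real.logb 2 n := by
      rw [Finset.sum_const, Finset.card_erase_of_mem (Finset.mem_univ i), Finset.card_univ,
        Fintype.card_fin, nsmul_eq_mul]
      have : 1 ≤ s := le_trans (by norm_num) hs
      push_cast [this]
      ring
    calc (Bad.card : ℝ) ≤ _ := by exact_mod_cast h1
      _ ≤ _ := h2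
      _ = _ := h3
  have hlt : Bad.card < F.card := by
    have : (Bad.card : ℝ) < (F.card : ℝ) := by
      rw [hcardF] at hB
      exact lt_of_le_of_lt hBadcard hB
    exact_mod_cast this
  have hex : ∃ p ∈ F, p ∉ Bad := by
    by_contra h
    push_neg at h
    exact absurd (Finset.card_le_card fun p hp => h p hp) (not_le.mpr hlt)
  obtain ⟨p, hpF, hpBad⟩ := hex
  have hpS : p ∈ S := hfin.mem_toFinset.mp hpF
  refine ⟨p, hpS.1, hpS.2, fun j hj hmod => ?_⟩
  apply hpBad
  rw [hBad, Finset.mem_biUnion]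
  refine ⟨j, Finset.mem_erase.mpr ⟨hj, Finset.mem_univ j⟩, ?_⟩
  rw [Nat.mem_primeFactors]
  have hdvd : (p : ℤ) ∣ x i - x j := by
    have := (Int.modEq_iff_dvd.mp hmod)
    exact (dvd_sub_comm).mp this
  refine ⟨hpS.1, ?_, ?_⟩
  · exact Int.natAbs_dvd_natAbs.mpr (by simpa using hdvd)
  · simp only [Int.natAbs_ne_zero, sub_ne_zero]
    exact fun h => hj (hinj h.symm)
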